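/- Let p be a prime, n ≥ 1, and let F be a nonzero polynomial in n variables over the ring ℤ_p of p-adic integers which is homogeneous of degree k, where k ≤ p − 2. Let ν be the minimum of the p-adic valuations of the (finitely many nonzero) coefficients of F. Then: (i) for every tuple (u_1,…,u_n) of units of ℤ_p, p^ν divides F(u_1,…,u_n); and (ii) there exists a tuple (u_1,…,u_n) of units of ℤ_p such that p^{ν+1} does not divide F(u_1,…,u_n), i.e. the p-adic valuation of F(u_1,…,u_n) is exactly ν. -/

import Mathlib

open MvPolynomial

/-- Auxiliary: a nonzero polynomial over a finite field of small degree has a nonzero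
value at some nonzero point. -/
lemma aux_poly_exists {K : Type*} [Field K] [Fintype K] (f : Polynomial K) (hf : f ≠ 0)
    (hdeg : f.natDegree + 1 < Fintype.card K) :
    ∃ a : K, a ≠ 0 ∧ Polynomial.eval a f ≠ 0 := by
  classical
  have h1 : f.roots.toFinset.card ≤ f.natDegree :=
    (Multiset.toFinset_card_le _).trans (f.card_roots')
  have h2 : (Finset.univ.erase (0 : K)).card = Fintype.card K - 1 := by
    rw [Finset.card_erase_of_mem (Finset.mem_univ _), Finset.card_univ]
  have hlt : f.roots.toFinset.card < (Finset.univ.erase (0 : K)).card := by omega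
  obtain ⟨a, ha, har⟩ : ∃ a ∈ Finset.univ.erase (0 : K), a ∉ f.roots.toFinset := by
    by_contra h
    push_neg at h
    exact absurd (Finset.card_le_card h) (not_le.mpr hlt)
  refine ⟨a, (Finset.mem_erase.mp ha).1, fun h => har ?_⟩
  rw [Multiset.mem_toFinset, Polynomial.mem_roots hf]
  exact h

/-- Auxiliary: a nonzero multivariate polynomial over a finite field, with degree in each
variable small, has a nonzero value at some point with all coordinates nonzero. -/
lemma aux_mv_exists {K : Type*} [Field K] [Fintype K] :
    ∀ (N : ℕ) (g : MvPolynomial (Fin N) K), g ≠ 0 →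
      (∀ i, g.degreeOf i + 1 < Fintype.card K) →
      ∃ x : Fin N → K, (∀ i, x i ≠ 0) ∧ MvPolynomial.eval x g ≠ 0 := by
  intro N
  induction N with
  | zero =>
    intro g hg _
    obtain ⟨a, rfl⟩ := MvPolynomial.C_surjective (Fin 0) g
    refine ⟨fun i => i.elim0, fun i => i.elim0, ?_⟩
    rw [eval_C]
    intro h
    exact hg (by rw [h, map_zero])
  | succ N IH =>
    intro g hg hdeg
    set q := finSuccEquiv K N g with hq
    have hq0 : q ≠ 0 := by
      intro h
      apply hg
      have := (finSuccEquiv K N).injective (h.trans (map_zero _).symm)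
      exact this
    obtain ⟨j, hj⟩ : ∃ j, q.coeff j ≠ 0 := by
      by_contra h
      push_neg at h
      exact hq0 (Polynomial.ext fun j => by simp [h j])
    have hcoeffdeg : ∀ i : Fin N, (q.coeff j).degreeOf i + 1 < Fintype.card K := by
      intro i
      have h1 := MvPolynomial.degreeOf_coeff_finSuccEquiv g i j
      rw [← hq] at h1
      have h2 := hdeg i.succ
      omega
    obtain ⟨r, hr, hr0⟩ := IH (q.coeff j) hj hcoeffdeg
    set φ := q.map (MvPolynomial.eval r) with hφ
    have hφ0 : φ ≠ 0 := by
      intro h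
      apply hr0
      have : φ.coeff j = 0 := by rw [h, Polynomial.coeff_zero]
      rwa [hφ, Polynomial.coeff_map] at this
    have hφdeg : φ.natDegree + 1 < Fintype.card K := by
      have h1 : φ.natDegree ≤ q.natDegree := Polynomial.natDegree_map_le
      have h2 : q.natDegree = g.degreeOf 0 := MvPolynomial.natDegree_finSuccEquiv g
      have := hdeg 0
      omega
    obtain ⟨a, ha, ha0⟩ := aux_poly_exists φ hφ0 hφdeg
    refine ⟨Fin.cons a r, ?_, ?_⟩
    · intro i
      refine Fin.cases ?_ ?_ i
      · simpa using ha
      · intro i'; simpa using hr i'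
    · rwa [MvPolynomial.eval_eq_eval_mv_eval']

/-- For a nonzero homogeneous polynomial `F` of degree `k ≤ p - 2` over `ℤ_p`, with `ν`
the minimum of the `p`-adic valuations of its coefficients: (i) `p^ν` divides `F(u)` for
every tuple of units `u`, and (ii) some tuple of units `u` has `p^(ν+1) ∤ F(u)`. -/
theorem stmt6 (p : ℕ) [Fact p.Prime] (n : ℕ) (hn : 1 ≤ n)
    (F : MvPolynomial (Fin n) ℤ_[p]) (hF : F ≠ 0)
    (k : ℕ) (hhom : F.IsHomogeneous k) (hk : k ≤ p - 2)
    (ν : ℕ)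
    (hν : IsLeast {v : ℕ | ∃ m ∈ F.support, (F.coeff m).valuation = (v : ℤ)} ν) :
    (∀ u : Fin n → ℤ_[p], (∀ i, IsUnit (u i)) →
        (p : ℤ_[p]) ^ ν ∣ MvPolynomial.eval u F)
    ∧ ∃ u : Fin n → ℤ_[p], (∀ i, IsUnit (u i)) ∧
        ¬ (p : ℤ_[p]) ^ (ν + 1) ∣ MvPolynomial.eval u F := by
  have hp2 : 2 ≤ p := (Fact.out : p.Prime).two_le
  -- every coefficient is divisible by p^ν
  have hdvd : ∀ m, (p : ℤ_[p]) ^ ν ∣ F.coeff m := by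
    intro m
    by_cases hm : F.coeff m = 0
    · rw [hm]; exact dvd_zero _
    · have hms : m ∈ F.support := MvPolynomial.mem_support_iff.mpr hm
      have hval : ν ≤ (F.coeff m).valuation := hν.2 ⟨m, hms, rfl⟩
      rw [← Ideal.mem_span_singleton]
      exact (PadicInt.mem_span_pow_iff_le_valuation _ hm ν).mpr hval
  constructor
  · -- part (i): no unit hypothesis even needed
    intro u _
    rw [MvPolynomial.eval_eq']
    refine Finset.dvd_sum fun m _ => ?_
    exact (hdvd m).mul_right _
  · -- part (ii)
    obtain ⟨m₀, hm₀s, hm₀v⟩ := hν.1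
    have hm₀ : F.coeff m₀ ≠ 0 := MvPolynomial.mem_support_iff.mp hm₀s
    -- factor out p^ν
    obtain ⟨G, hG⟩ := (MvPolynomial.C_dvd_iff_dvd_coeff ((p : ℤ_[p]) ^ ν) F).mpr hdvd
    have hcoeff : ∀ m, F.coeff m = (p : ℤ_[p]) ^ ν * G.coeff m := by
      intro m
      rw [hG, MvPolynomial.coeff_C_mul]
    -- the distinguished coefficient of G is a unit
    have hpν : ((p : ℤ_[p]) ^ ν) ≠ 0 := pow_ne_zero _ (NeZero.ne _)
    have hGm₀ : G.coeff m₀ ≠ 0 := by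
      intro h
      apply hm₀
      rw [hcoeff m₀, h, mul_zero]
    have hGval : (G.coeff m₀).valuation = 0 := by
      have := PadicInt.valuation_p_pow_mul ν (G.coeff m₀) hGm₀
      rw [← hcoeff m₀] at this
      omega
    have hGunit : ¬ (p : ℤ_[p]) ∣ G.coeff m₀ := by
      intro hdd
      have h1 : ‖G.coeff m₀‖ < 1 := (PadicInt.norm_lt_one_iff_dvd _).mpr hdd
      have h2 : ‖G.coeff m₀‖ = 1 := by
        rw [PadicInt.norm_eq_zpow_neg_valuation hGm₀, hGval]; simp
      rw [h2] at h1; exact lt_irrefl _ h1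
    -- the reduction mod p
    have hker : ∀ x : ℤ_[p], PadicInt.toZMod x = 0 ↔ (p : ℤ_[p]) ∣ x := by
      intro x
      rw [show (PadicInt.toZMod x = 0 ↔ x ∈ RingHom.ker (PadicInt.toZMod (p := p))) from
        Iff.rfl.trans (by rw [RingHom.mem_ker]), PadicInt.ker_toZMod,
        PadicInt.maximalIdeal_eq_span_p, Ideal.mem_span_singleton]
    set g := G.map (PadicInt.toZMod) with hg
    have hg0 : g ≠ 0 := by
      intro h
      apply hGunit
      rw [← hker]
      have : g.coeff m₀ = 0 := by rw [h, MvPolynomial.coeff_zero]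
      rwa [hg, MvPolynomial.coeff_map] at this
    -- degree bounds from homogeneity
    have hsupp : ∀ m, m ∈ g.support → ∀ i, m i ≤ k := by
      intro m hm i
      have hgm : g.coeff m ≠ 0 := MvPolynomial.mem_support_iff.mp hm
      have hGm : G.coeff m ≠ 0 := by
        intro h
        apply hgm
        rw [hg, MvPolynomial.coeff_map, h, map_zero]
      have hFm : F.coeff m ≠ 0 := by
        rw [hcoeff m]
        exact mul_ne_zero hpν hGm
      have hw := hhom hFm
      have hd : Finsupp.degree m = k := by rwa [Finsupp.degree_eq_weight_one]
      calc m i ≤ Finsupp.degree m := Finsupp.le_degree i m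
        _ = k := hd
    have hdeg : ∀ i, g.degreeOf i + 1 < Fintype.card (ZMod p) := by
      intro i
      have : g.degreeOf i ≤ k := by
        rw [MvPolynomial.degreeOf_le_iff]
        intro m hm
        exact hsupp m hm i
      rw [ZMod.card]
      omega
    obtain ⟨x, hx, hx0⟩ := aux_mv_exists n g hg0 hdeg
    -- lift x to units of ℤ_[p]
    set u : Fin n → ℤ_[p] := fun i => ((x i).val : ℤ_[p]) with hu
    have htoZMod : ∀ i, PadicInt.toZMod (u i) = x i := by
      intro i
      rw [hu]
      simp only [map_natCast]
      rw [ZMod.natCast_val, ZMod.cast_id]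
    have hunit : ∀ i, IsUnit (u i) := by
      intro i
      rw [PadicInt.isUnit_iff]
      by_contra h
      have hlt : ‖u i‖ < 1 := lt_of_le_of_ne (PadicInt.norm_le_one _) h
      have : (p : ℤ_[p]) ∣ u i := (PadicInt.norm_lt_one_iff_dvd _).mp hlt
      exact hx i (by rw [← htoZMod i, hker]; exact this)
    refine ⟨u, hunit, ?_⟩
    -- eval u G is a unit mod p
    have hevalG : ¬ (p : ℤ_[p]) ∣ MvPolynomial.eval u G := by
      intro h
      apply hx0
      have : PadicInt.toZMod (MvPolynomial.eval u G) = 0 := (hker _).mpr h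
      rwa [show PadicInt.toZMod (MvPolynomial.eval u G) = MvPolynomial.eval x g by
        rw [hg, MvPolynomial.eval_map,
          show MvPolynomial.eval u G = MvPolynomial.eval₂ (RingHom.id _) u G from rfl,
          MvPolynomial.eval₂_comp_left]
        congr 1
        funext i
        exact htoZMod i] at this
    intro hcontra
    rw [hG, map_mul, MvPolynomial.eval_C, pow_succ] at hcontra
    exact hevalG ((mul_dvd_mul_iff_left hpν).mp hcontra)
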